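/- Let A be a real symmetric, diagonally dominant matrix with nonnegative diagonal, and let N ⊆ {1,…,n}×{1,…,n} be a symmetric set of index pairs ((i,j) ∈ N ⟺ (j,i) ∈ N) containing all diagonal pairs (i,i). Define Â by Â_{ij} = A_{ij} if (i,j) ∈ N, Â_{ij} = 0 if (i,j) ∉ N and i ≠ j, and Â_{ii} = A_{ii} + Σ_{j : j ≠ i, (i,j) ∉ N} A_{ij}. Then Â is symmetric, diagonally dominant with nonnegative diagonal, and positive semi-definite. -/

import Mathlib

open Matrix Finset

lemma psd_of_dd {n : ℕ} (A : Matrix (Fin n) (Fin n) ℝ) (hs : A.IsSymm)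
    (hdd : ∀ r, ∑ k ∈ Finset.univ \ {r}, |A r k| ≤ A r r) : A.PosSemidef := by
  have habs : ∀ i j, |A j i| = |A i j| := fun i j => by rw [hs.apply]
  have hdnn : ∀ r, (0:ℝ) ≤ A r r := fun r =>
    le_trans (Finset.sum_nonneg fun k _ => abs_nonneg _) (hdd r)
  rw [Matrix.posSemidef_iff_dotProduct_mulVec]
  constructor
  · rw [Matrix.IsHermitian]
    ext i j
    simp [Matrix.conjTranspose_apply, hs.apply]
  · intro x
    have hQ : (star x ⬝ᵥ A.mulVec x) = ∑ i, ∑ j, A i j * x i * x j := by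
      simp only [dotProduct, Matrix.mulVec, RCLike.star_def, Pi.star_apply,
        star_trivial, Finset.mul_sum]
      exact Finset.sum_congr rfl fun i _ => Finset.sum_congr rfl fun j _ => by ring
    rw [hQ]
    -- split each inner sum
    have hsplit : ∀ i, ∑ j, A i j * x i * x j
        = A i i * x i * x i + ∑ j ∈ Finset.univ \ {i}, A i j * x i * x j := by
      intro i
      rw [Finset.sdiff_singleton_eq_erase]
      exact (Finset.add_sum_erase _ _ (Finset.mem_univ i)).symm
    have key : ∀ i j : Fin n, -( |A i j| * (x i ^ 2 + x j ^ 2) / 2) ≤ A i j * x i * x j := by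
      intro i j
      have h1 : |A i j * x i * x j| ≤ |A i j| * (x i ^ 2 + x j ^ 2) / 2 := by
        rw [abs_mul, abs_mul]
        have h2 : |x i| * |x j| ≤ (x i ^ 2 + x j ^ 2) / 2 := by
          nlinarith [sq_nonneg (|x i| - |x j|), sq_abs (x i), sq_abs (x j)]
        nlinarith [abs_nonneg (A i j), abs_nonneg (x i), abs_nonneg (x j)]
      linarith [neg_abs_le (A i j * x i * x j)]
    have hswap : ∑ i, ∑ j ∈ Finset.univ \ {i}, |A i j| * x j ^ 2
        = ∑ j, ∑ i ∈ Finset.univ \ {j}, |A i j| * x j ^ 2 := by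
      rw [Finset.sum_comm' (s := Finset.univ) (t := fun i => Finset.univ \ {i})
        (t' := Finset.univ) (s' := fun j => Finset.univ \ {j})]
      intro i j
      simp [Finset.mem_sdiff, eq_comm, ne_comm]
    have step : ∀ i, A i i * x i * x i + ∑ j ∈ Finset.univ \ {i}, A i j * x i * x j
        ≥ A i i * x i ^ 2 - (∑ j ∈ Finset.univ \ {i}, |A i j| * (x i ^ 2 + x j ^ 2) / 2) := by
      intro i
      have := Finset.sum_le_sum (s := Finset.univ \ {i})
        (f := fun j => -( |A i j| * (x i ^ 2 + x j ^ 2) / 2))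
        (g := fun j => A i j * x i * x j) (fun j _ => key i j)
      rw [Finset.sum_neg_distrib] at this
      have hx : A i i * x i * x i = A i i * x i ^ 2 := by ring
      linarith
    have total : ∑ i, ∑ j, A i j * x i * x j
        ≥ ∑ i, (A i i * x i ^ 2 - ∑ j ∈ Finset.univ \ {i}, |A i j| * (x i ^ 2 + x j ^ 2) / 2) := by
      apply Finset.sum_le_sum
      intro i _
      rw [hsplit i]
      exact step i
    have expand : ∀ i, ∑ j ∈ Finset.univ \ {i}, |A i j| * (x i ^ 2 + x j ^ 2) / 2
        = (∑ j ∈ Finset.univ \ {i}, |A i j| * x i ^ 2) / 2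
          + (∑ j ∈ Finset.univ \ {i}, |A i j| * x j ^ 2) / 2 := by
      intro i
      rw [Finset.sum_div, Finset.sum_div, ← Finset.sum_add_distrib]
      exact Finset.sum_congr rfl fun j _ => by ring
    have bound1 : ∀ i, (∑ j ∈ Finset.univ \ {i}, |A i j| * x i ^ 2) ≤ A i i * x i ^ 2 := by
      intro i
      rw [← Finset.sum_mul]
      exact mul_le_mul_of_nonneg_right (hdd i) (sq_nonneg _)
    have bound2 : ∑ i, ∑ j ∈ Finset.univ \ {i}, |A i j| * x j ^ 2 ≤ ∑ i, A i i * x i ^ 2 := by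
      rw [hswap]
      apply Finset.sum_le_sum
      intro j _
      calc ∑ i ∈ Finset.univ \ {j}, |A i j| * x j ^ 2
          = (∑ i ∈ Finset.univ \ {j}, |A j i|) * x j ^ 2 := by
            rw [Finset.sum_mul]; exact Finset.sum_congr rfl fun i _ => by rw [habs]
        _ ≤ A j j * x j ^ 2 := mul_le_mul_of_nonneg_right (hdd j) (sq_nonneg _)
    have final : (0:ℝ) ≤ ∑ i, (A i i * x i ^ 2 - ∑ j ∈ Finset.univ \ {i}, |A i j| * (x i ^ 2 + x j ^ 2) / 2) := by
      have e : ∑ i, (A i i * x i ^ 2 - ∑ j ∈ Finset.univ \ {i}, |A i j| * (x i ^ 2 + x j ^ 2) / 2)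
          = ∑ i, A i i * x i ^ 2
            - ((∑ i, ∑ j ∈ Finset.univ \ {i}, |A i j| * x i ^ 2) / 2
              + (∑ i, ∑ j ∈ Finset.univ \ {i}, |A i j| * x j ^ 2) / 2) := by
        rw [Finset.sum_sub_distrib]
        congr 1
        rw [Finset.sum_div, Finset.sum_div, ← Finset.sum_add_distrib]
        exact Finset.sum_congr rfl fun i _ => by rw [expand i]
      rw [e]
      have b1 : ∑ i, ∑ j ∈ Finset.univ \ {i}, |A i j| * x i ^ 2 ≤ ∑ i, A i i * x i ^ 2 :=
        Finset.sum_le_sum fun i _ => bound1 i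
      linarith
    linarith [total, final]

theorem stmt3 {n : ℕ} (A Ahat : Matrix (Fin n) (Fin n) ℝ)
    (N : Finset (Fin n × Fin n))
    (hsym : A.IsSymm)
    (hdd : ∀ r, ∑ k ∈ Finset.univ \ {r}, |A r k| ≤ A r r)
    (hdiag : ∀ r, 0 ≤ A r r)
    (hNsym : ∀ i j : Fin n, (i, j) ∈ N ↔ (j, i) ∈ N)
    (hNdiag : ∀ i : Fin n, (i, i) ∈ N)
    (hkeep : ∀ i j : Fin n, i ≠ j → (i, j) ∈ N → Ahat i j = A i j)
    (hdrop : ∀ i j : Fin n, i ≠ j → (i, j) ∉ N → Ahat i j = 0)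
    (hAdiag : ∀ i : Fin n,
      Ahat i i = A i i + ∑ j ∈ Finset.univ.filter (fun j => j ≠ i ∧ (i, j) ∉ N), A i j) :
    Ahat.IsSymm ∧ (∀ r, ∑ k ∈ Finset.univ \ {r}, |Ahat r k| ≤ Ahat r r) ∧
      (∀ r, 0 ≤ Ahat r r) ∧ Ahat.PosSemidef := by
  have hsymhat : Ahat.IsSymm := by
    rw [Matrix.IsSymm]
    ext i j
    rw [Matrix.transpose_apply]
    by_cases hij : i = j
    · subst hij; rfl
    · have hji : j ≠ i := Ne.symm hij
      by_cases hN : (i, j) ∈ N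
      · rw [hkeep i j hij hN, hkeep j i hji ((hNsym i j).mp hN), hsym.apply]
      · rw [hdrop i j hij hN, hdrop j i hji (fun h => hN ((hNsym j i).mp h))]
  have hddhat : ∀ r, ∑ k ∈ Finset.univ \ {r}, |Ahat r k| ≤ Ahat r r := by
    intro r
    set K := (Finset.univ \ {r}).filter (fun k => (r, k) ∈ N) with hK
    set D := (Finset.univ \ {r}).filter (fun k => ¬ (r, k) ∈ N) with hD
    have hLsplit : ∑ k ∈ Finset.univ \ {r}, |Ahat r k|
        = ∑ k ∈ K, |Ahat r k| + ∑ k ∈ D, |Ahat r k| :=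
      (Finset.sum_filter_add_sum_filter_not _ _ _).symm
    have hmemK : ∀ k ∈ K, r ≠ k ∧ (r, k) ∈ N := by
      intro k hk
      simp only [hK, Finset.mem_filter, Finset.mem_sdiff, Finset.mem_singleton] at hk
      exact ⟨fun h => hk.1.2 h.symm, hk.2⟩
    have hmemD : ∀ k ∈ D, r ≠ k ∧ (r, k) ∉ N := by
      intro k hk
      simp only [hD, Finset.mem_filter, Finset.mem_sdiff, Finset.mem_singleton] at hk
      exact ⟨fun h => hk.1.2 h.symm, hk.2⟩
    have hKeq : ∑ k ∈ K, |Ahat r k| = ∑ k ∈ K, |A r k| :=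
      Finset.sum_congr rfl fun k hk => by
        rw [hkeep r k (hmemK k hk).1 (hmemK k hk).2]
    have hDeq : ∑ k ∈ D, |Ahat r k| = 0 :=
      Finset.sum_eq_zero fun k hk => by
        rw [hdrop r k (hmemD k hk).1 (hmemD k hk).2, abs_zero]
    have hAsplit : ∑ k ∈ Finset.univ \ {r}, |A r k|
        = ∑ k ∈ K, |A r k| + ∑ k ∈ D, |A r k| :=
      (Finset.sum_filter_add_sum_filter_not _ _ _).symm
    have hDset : Finset.univ.filter (fun j => j ≠ r ∧ (r, j) ∉ N) = D := by
      ext j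
      simp only [hD, Finset.mem_filter, Finset.mem_sdiff, Finset.mem_singleton,
        Finset.mem_univ, true_and]
    have hdiaghat : Ahat r r = A r r + ∑ j ∈ D, A r j := by
      rw [hAdiag r, hDset]
    have hDlb : ∑ j ∈ D, -|A r j| ≤ ∑ j ∈ D, A r j :=
      Finset.sum_le_sum fun j _ => neg_abs_le _
    rw [Finset.sum_neg_distrib] at hDlb
    have := hdd r
    rw [hAsplit] at this
    rw [hLsplit, hKeq, hDeq, hdiaghat]
    linarith
  have hdghat : ∀ r, 0 ≤ Ahat r r := fun r =>
    le_trans (Finset.sum_nonneg fun k _ => abs_nonneg _) (hddhat r)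
  exact ⟨hsymhat, hddhat, hdghat, psd_of_dd Ahat hsymhat hddhat⟩
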